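/- Let α, β, θ, γ > 0 and x₀ ∈ ℝ, and let x : [0,∞) → ℝ be a continuous solution of the fluid equation x(t) = x₀ + (α − β)t − θ∫₀ᵗ x⁺(s) ds + γ∫₀ᵗ x⁻(s) ds. Then lim_{t→∞} x(t) = (α − β)/θ if α ≥ β, and lim_{t→∞} x(t) = (α − β)/γ if α < β. -/

import Mathlib

open Set Filter Real intervalIntegral

-- key pointwise inequality
lemma key_ineq (θ γ a L : ℝ) (hθ : 0 < θ) (hγ : 0 < γ) :
    (a - L) * ((θ * max L 0 - γ * max (-L) 0) - (θ * max a 0 - γ * max (-a) 0))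
      ≤ -(min θ γ) * (a - L) ^ 2 := by
  set p := max a 0 - max L 0 with hp
  set q := max (-L) 0 - max (-a) 0 with hq
  have ha : a = max a 0 - max (-a) 0 := by rcases le_total a 0 with h | h <;> simp [max_eq_left, max_eq_right, *] <;> linarith
  have hLe : L = max L 0 - max (-L) 0 := by rcases le_total L 0 with h | h <;> simp [max_eq_left, max_eq_right, *] <;> linarith
  have hsum : a - L = p + q := by rw [hp, hq]; nth_rewrite 1 [ha]; nth_rewrite 1 [hLe]; ring
  have hpq : 0 ≤ p * q := by
    rcases le_total a L with h | h
    · have h1 : p ≤ 0 := sub_nonpos.2 (max_le_max h le_rfl)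
      have h2 : q ≤ 0 := sub_nonpos.2 (max_le_max (by linarith) le_rfl)
      nlinarith [mul_nonneg (neg_nonneg.2 h1) (neg_nonneg.2 h2)]
    · have h1 : 0 ≤ p := sub_nonneg.2 (max_le_max h le_rfl)
      have h2 : 0 ≤ q := sub_nonneg.2 (max_le_max (by linarith) le_rfl)
      exact mul_nonneg h1 h2
  have hm1 : min θ γ ≤ θ := min_le_left _ _
  have hm2 : min θ γ ≤ γ := min_le_right _ _
  have hlhs : (a - L) * ((θ * max L 0 - γ * max (-L) 0) - (θ * max a 0 - γ * max (-a) 0))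
      = -(p + q) * (θ * p + γ * q) := by rw [hsum, hp, hq]; ring
  rw [hlhs, hsum]
  nlinarith [sq_nonneg p, sq_nonneg q, mul_nonneg (sub_nonneg.2 hm1) (sq_nonneg p),
    mul_nonneg (sub_nonneg.2 hm2) (sq_nonneg q)]

/-- `x : ℝ → ℝ`, viewed as a function on `[0,∞)`, is a continuous solution of the fluid
equation `x(t) = x₀ + (α - β)t - θ∫₀ᵗ x⁺(s) ds + γ∫₀ᵗ x⁻(s) ds` for `t ≥ 0`. -/
def IsFluidSolution (α β θ γ x₀ : ℝ) (x : ℝ → ℝ) : Prop :=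
  ContinuousOn x (Set.Ici 0) ∧
    ∀ t : ℝ, 0 ≤ t →
      x t = x₀ + (α - β) * t - θ * (∫ s in (0:ℝ)..t, max (x s) 0)
        + γ * (∫ s in (0:ℝ)..t, max (-x s) 0)

lemma fluid_tendsto (α β θ γ x₀ L : ℝ) (hθ : 0 < θ) (hγ : 0 < γ)
    (hL : θ * max L 0 - γ * max (-L) 0 = α - β)
    (x : ℝ → ℝ) (hx : IsFluidSolution α β θ γ x₀ x) :
    Filter.Tendsto x Filter.atTop (nhds L) := by
  obtain ⟨hxc, heq⟩ := hx
  set m := min θ γ with hm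
  have hm0 : 0 < m := lt_min hθ hγ
  -- continuity of the integrands on Ioi 0 and everywhere needed
  have hc1 : ContinuousOn (fun s => max (x s) 0) (Ici 0) := (continuous_id.max continuous_const).comp_continuousOn hxc
  have hc2 : ContinuousOn (fun s => max (-x s) 0) (Ici 0) := (continuous_id.max continuous_const).comp_continuousOn hxc.neg
  -- derivative of x at interior points
  have hderiv : ∀ t : ℝ, 0 < t →
      HasDerivAt x ((α - β) - (θ * max (x t) 0 - γ * max (-x t) 0)) t := by
    intro t ht
    have hmem : Ici (0:ℝ) ∈ nhds t := Ici_mem_nhds ht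
    have hint1 : IntervalIntegrable (fun s => max (x s) 0) MeasureTheory.volume 0 t :=
      (hc1.mono (by rw [uIcc_of_le ht.le]; exact Icc_subset_Ici_self)).intervalIntegrable
    have hint2 : IntervalIntegrable (fun s => max (-x s) 0) MeasureTheory.volume 0 t :=
      (hc2.mono (by rw [uIcc_of_le ht.le]; exact Icc_subset_Ici_self)).intervalIntegrable
    have hms1 := (hc1.mono (Ioi_subset_Ici le_rfl : Ioi (0:ℝ) ⊆ Ici 0)).stronglyMeasurableAtFilter
      (μ := MeasureTheory.volume) isOpen_Ioi t ht
    have hms2 := (hc2.mono (Ioi_subset_Ici le_rfl : Ioi (0:ℝ) ⊆ Ici 0)).stronglyMeasurableAtFilter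
      (μ := MeasureTheory.volume) isOpen_Ioi t ht
    have hca1 : ContinuousAt (fun s => max (x s) 0) t := hc1.continuousAt hmem
    have hca2 : ContinuousAt (fun s => max (-x s) 0) t := hc2.continuousAt hmem
    have hF : HasDerivAt (fun u => ∫ s in (0:ℝ)..u, max (x s) 0) (max (x t) 0) t :=
      intervalIntegral.integral_hasDerivAt_right hint1 hms1 hca1
    have hG : HasDerivAt (fun u => ∫ s in (0:ℝ)..u, max (-x s) 0) (max (-x t) 0) t :=
      intervalIntegral.integral_hasDerivAt_right hint2 hms2 hca2
    have h0 : HasDerivAt (fun u => x₀ + (α - β) * u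
        - θ * (∫ s in (0:ℝ)..u, max (x s) 0) + γ * (∫ s in (0:ℝ)..u, max (-x s) 0))
        ((α - β) - (θ * max (x t) 0 - γ * max (-x t) 0)) t := by
      have := (((hasDerivAt_const t x₀).add ((hasDerivAt_id t).const_mul (α - β))).sub
        (hF.const_mul θ)).add (hG.const_mul γ)
      exact this.congr_deriv (by ring)
    refine h0.congr_of_eventuallyEq ?_
    filter_upwards [hmem] with u hu using heq u hu
  -- the Lyapunov function
  set W : ℝ → ℝ := fun t => Real.exp (2 * m * t) * (x t - L) ^ 2 with hW
  have hWc : ContinuousOn W (Ici 0) := by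
    apply ContinuousOn.mul (Continuous.continuousOn (by continuity))
    exact (hxc.sub continuousOn_const).pow 2
  have hWd : ∀ t ∈ interior (Ici (0:ℝ)), HasDerivAt W
      (Real.exp (2 * m * t) * (2 * m * (x t - L) ^ 2
        + 2 * (x t - L) * ((α - β) - (θ * max (x t) 0 - γ * max (-x t) 0)))) t := by
    intro t ht
    rw [interior_Ici] at ht
    have hx' := hderiv t ht
    have he : HasDerivAt (fun u => Real.exp (2 * m * u)) (2 * m * Real.exp (2 * m * t)) t := by
      simpa [mul_comm] using ((hasDerivAt_id t).const_mul (2 * m)).exp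
    have hq : HasDerivAt (fun u => (x u - L) ^ 2) (2 * (x t - L) * ((α - β) - (θ * max (x t) 0 - γ * max (-x t) 0))) t := by
      have := ((hx'.sub_const L).fun_pow 2)
      simpa [mul_comm, mul_assoc] using this
    have := he.mul hq
    exact this.congr_deriv (by ring)
  have hWanti : AntitoneOn W (Ici 0) := by
    apply antitoneOn_of_deriv_nonpos (convex_Ici 0) hWc
    · intro t ht
      exact (hWd t ht).differentiableAt.differentiableWithinAt
    · intro t ht
      rw [(hWd t ht).deriv]
      have hki := key_ineq θ γ (x t) L hθ hγ
      rw [hL] at hki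
      have he : (0:ℝ) < Real.exp (2 * m * t) := Real.exp_pos _
      have : 2 * m * (x t - L) ^ 2
          + 2 * (x t - L) * ((α - β) - (θ * max (x t) 0 - γ * max (-x t) 0)) ≤ 0 := by
        nlinarith [hki]
      exact mul_nonpos_of_nonneg_of_nonpos he.le this
  -- bound: (x t - L)^2 ≤ (x 0 - L)^2 * exp (-(2m) t)
  have hbound : ∀ t : ℝ, 0 ≤ t → (x t - L) ^ 2 ≤ (x 0 - L) ^ 2 * Real.exp (-(2 * m * t)) := by
    intro t ht
    have := hWanti (self_mem_Ici) ht ht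
    simp only [hW, mul_zero, Real.exp_zero, one_mul] at this
    rw [Real.exp_neg, ← div_eq_mul_inv, le_div_iff₀ (Real.exp_pos _), mul_comm]
    exact this
  -- squeeze
  have h0 : Tendsto (fun t => (x t - L) ^ 2) atTop (nhds 0) := by
    have hub : Tendsto (fun t => (x 0 - L) ^ 2 * Real.exp (-(2 * m * t))) atTop (nhds 0) := by
      have hexp : Tendsto (fun t : ℝ => Real.exp (-(2 * m * t))) atTop (nhds 0) := by
        apply Real.tendsto_exp_atBot.comp
        apply tendsto_neg_atBot_iff.mpr
        exact (tendsto_id.const_mul_atTop (by positivity : (0:ℝ) < 2 * m))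
      simpa using hexp.const_mul ((x 0 - L) ^ 2)
    refine tendsto_of_tendsto_of_tendsto_of_le_of_le' tendsto_const_nhds hub ?_ ?_
    · exact Eventually.of_forall fun t => sq_nonneg _
    · filter_upwards [eventually_ge_atTop (0:ℝ)] with t ht using hbound t ht
  have habs : Tendsto (fun t => |x t - L|) atTop (nhds 0) := by
    have := (Real.continuous_sqrt.tendsto 0).comp h0
    simpa [Function.comp_def, Real.sqrt_sq_eq_abs] using this
  have : Tendsto (fun t => x t - L) atTop (nhds 0) := by
    have hneg : Tendsto (fun t => -|x t - L|) atTop (nhds 0) := by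
      simpa using habs.neg
    exact tendsto_of_tendsto_of_tendsto_of_le_of_le' hneg habs
      (Eventually.of_forall fun t => neg_abs_le _) (Eventually.of_forall fun t => le_abs_self _)
  have := this.add_const L
  simpa using this

/-- Any continuous solution of the fluid equation converges as `t → ∞` to
`(α - β)/θ` if `α ≥ β`, and to `(α - β)/γ` if `α < β`. -/
theorem stmt_11 (α β θ γ x₀ : ℝ) (hα : 0 < α) (hβ : 0 < β) (hθ : 0 < θ) (hγ : 0 < γ)
    (x : ℝ → ℝ) (hx : IsFluidSolution α β θ γ x₀ x) :
    (β ≤ α → Filter.Tendsto x Filter.atTop (nhds ((α - β) / θ))) ∧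
    (α < β → Filter.Tendsto x Filter.atTop (nhds ((α - β) / γ))) := by
  constructor
  · intro hba
    apply fluid_tendsto α β θ γ x₀ _ hθ hγ _ x hx
    have hL0 : 0 ≤ (α - β) / θ := div_nonneg (by linarith) hθ.le
    rw [max_eq_left hL0, max_eq_right (by linarith), mul_zero, sub_zero,
      mul_div_cancel₀ _ hθ.ne']
  · intro hab
    apply fluid_tendsto α β θ γ x₀ _ hθ hγ _ x hx
    have hL0 : (α - β) / γ ≤ 0 := div_nonpos_of_nonpos_of_nonneg (by linarith) hγ.le
    rw [max_eq_right hL0, max_eq_left (by linarith : (0:ℝ) ≤ -((α-β)/γ)), mul_zero, zero_sub]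
    field_simp
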